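/- (Perfect estimates imply no surprise.) In the two-candidate P_2-voter model, if the voter's estimates are exact, i.e., p̂_{22} = p_{22} and p̂_{21} = p_{21}, then there exists N such that for all n ≥ N, P(Z > 0) ≤ exp(−2·(p_{22}·p_{21}/(p_{22} + p_{21}))²·√n); hence a P_2 voter with perfect connection-probability estimates is not surprised with high probability. -/

import Mathlib

open MeasureTheory ProbabilityTheory Real

lemma three_point_mgf {Ω : Type*} [MeasurableSpace Ω] (μ : Measure Ω) [IsProbabilityMeasure μ]
    (W : Ω → ℝ) (hW : Measurable W) (b a : ℝ) (hba : b ≠ a) (hb0 : b ≠ 0) (ha0 : a ≠ 0)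
    (qb qa q0 : ℝ) (hqb : 0 ≤ qb) (hqa : 0 ≤ qa) (hq0 : 0 ≤ q0) (hsum : qb + qa + q0 = 1)
    (hb : μ {ω | W ω = b} = ENNReal.ofReal qb) (ha : μ {ω | W ω = a} = ENNReal.ofReal qa)
    (h0 : μ {ω | W ω = 0} = ENNReal.ofReal q0) (t : ℝ) :
    Integrable (fun ω => exp (t * W ω)) μ ∧
      ∫ ω, exp (t * W ω) ∂μ = qb * exp (t * b) + qa * exp (t * a) + q0 := by
  classical
  set A : Set Ω := {ω | W ω = b} with hA_def
  set B : Set Ω := {ω | W ω = a} with hB_def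
  set C : Set Ω := {ω | W ω = 0} with hC_def
  have hAm : MeasurableSet A := hW (measurableSet_singleton b)
  have hBm : MeasurableSet B := hW (measurableSet_singleton a)
  have hCm : MeasurableSet C := hW (measurableSet_singleton 0)
  have hdAB : Disjoint A B := by
    rw [Set.disjoint_left]; intro ω h1 h2
    exact hba (h1.symm.trans h2)
  have hdABC : Disjoint (A ∪ B) C := by
    rw [Set.disjoint_left]; intro ω h1 h2
    rcases h1 with h1 | h1
    · exact hb0 (h1.symm.trans h2)
    · exact ha0 (h1.symm.trans h2)
  have hunion : μ (A ∪ B ∪ C) = 1 := by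
    rw [measure_union hdABC hCm, measure_union hdAB hBm, hb, ha, h0,
      ← ENNReal.ofReal_add hqb hqa, ← ENNReal.ofReal_add (by linarith) hq0, hsum,
      ENNReal.ofReal_one]
  have hae : ∀ᵐ ω ∂μ, ω ∈ A ∪ B ∪ C := by
    rw [ae_iff]
    have : μ (A ∪ B ∪ C)ᶜ = 1 - μ (A ∪ B ∪ C) := by
      rw [measure_compl ((hAm.union hBm).union hCm) (measure_ne_top μ _)]
      simp
    rw [hunion, tsub_self] at this; exact this
  set g : Ω → ℝ := A.indicator (fun _ => exp (t * b)) + B.indicator (fun _ => exp (t * a))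
    + C.indicator (fun _ => 1) with hg_def
  have haeg : (fun ω => exp (t * W ω)) =ᵐ[μ] g := by
    filter_upwards [hae] with ω hω
    rcases hω with (h | h) | h
    · have h1 : ω ∉ B := fun h' => hba (h.symm.trans h')
      have h2 : ω ∉ C := fun h' => hb0 (h.symm.trans h')
      simp [hg_def, Set.indicator_of_mem h, Set.indicator_of_notMem h1,
        Set.indicator_of_notMem h2, show W ω = b from h]
    · have h1 : ω ∉ A := fun h' => hba (h'.symm.trans h)
      have h2 : ω ∉ C := fun h' => ha0 (h.symm.trans h')
      simp [hg_def, Set.indicator_of_mem h, Set.indicator_of_notMem h1,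
        Set.indicator_of_notMem h2, show W ω = a from h]
    · have h1 : ω ∉ A := fun h' => hb0 (h'.symm.trans h)
      have h2 : ω ∉ B := fun h' => ha0 (h'.symm.trans h)
      simp [hg_def, Set.indicator_of_mem h, Set.indicator_of_notMem h1,
        Set.indicator_of_notMem h2, show W ω = 0 from h]
  have hintg : Integrable g μ :=
    (((integrable_const _).indicator hAm).add ((integrable_const _).indicator hBm)).add
      ((integrable_const _).indicator hCm)
  have hint : Integrable (fun ω => exp (t * W ω)) μ := hintg.congr haeg.symm
  refine ⟨hint, ?_⟩
  rw [integral_congr_ae haeg, hg_def]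
  rw [integral_add' (((integrable_const _).indicator hAm).add
      ((integrable_const _).indicator hBm)) ((integrable_const _).indicator hCm),
    integral_add' ((integrable_const _).indicator hAm) ((integrable_const _).indicator hBm),
    integral_indicator_const _ hAm, integral_indicator_const _ hBm,
    integral_indicator_const _ hCm, measureReal_def, measureReal_def, measureReal_def,
    hb, ha, h0,
    ENNReal.toReal_ofReal hqb, ENNReal.toReal_ofReal hqa, ENNReal.toReal_ofReal hq0]
  simp [mul_comm]

lemma exp_le_quad {x : ℝ} (hx : |x| ≤ 1) : exp x ≤ 1 + x + x ^ 2 := by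
  have h := Real.exp_bound hx (by norm_num : 0 < 2)
  simp [Finset.sum_range_succ, Nat.factorial] at h
  have h' := abs_le.mp h
  nlinarith [sq_abs x]

lemma sqrt_le_lin {x δ : ℝ} (hx : 0 ≤ x) (hδ : 0 < δ) : Real.sqrt x ≤ δ * x + 1 / δ := by
  have hd : δ * (1 / δ) = 1 := by field_simp
  have h : x ≤ (δ * x + 1 / δ) ^ 2 := by nlinarith [sq_nonneg (δ * x), sq_nonneg (1 / δ)]
  calc Real.sqrt x ≤ Real.sqrt ((δ * x + 1 / δ) ^ 2) := Real.sqrt_le_sqrt h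
    _ = δ * x + 1 / δ := Real.sqrt_sq (by positivity)

set_option maxHeartbeats 1600000 in
/-- (Perfect estimates imply no surprise.)  Two-candidate model,
voter `v ∈ P₂`, with exact estimates `p̂₂₂ = p₂₂`, `p̂₂₁ = p₂₁`.  Then there is `N`
such that for all `n ≥ N`, `P(Z > 0) ≤ exp(-2 (p₂₂ p₂₁/(p₂₂+p₂₁))² √n)`. -/
theorem surprise_two_candidates_perfect_estimates
    {Ω : Type*} [MeasurableSpace Ω] (μ : Measure Ω) [IsProbabilityMeasure μ]
    (ε : ℝ) (hε : 0 < ε) (hε' : ε < 1/2)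
    (p22 p21 phat22 phat21 : ℝ)
    (hp22 : 0 < p22) (hp22' : p22 ≤ 1) (hp21 : 0 < p21) (hp21' : p21 ≤ 1)
    (hphat22 : 0 < phat22) (hphat22' : phat22 ≤ 1)
    (hphat21 : 0 < phat21) (hphat21' : phat21 ≤ 1)
    (Y : ℕ → Ω → ℝ) (hmeas : ∀ i, Measurable (Y i))
    (hindep : iIndepFun Y μ)
    (hY1 : ∀ i, μ {ω | Y i ω = 1/phat22} = ENNReal.ofReal ((1/2 - ε) * p22))
    (hY2 : ∀ i, μ {ω | Y i ω = -1/phat21} = ENNReal.ofReal ((1/2 + ε) * p21))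
    (hY0 : ∀ i, μ {ω | Y i ω = 0} =
      ENNReal.ofReal (1 - (1/2 - ε) * p22 - (1/2 + ε) * p21))
    (hexact22 : phat22 = p22) (hexact21 : phat21 = p21) :
    ∃ N : ℕ, ∀ n : ℕ, N ≤ n →
      μ {ω | 0 < 1 + ∑ i ∈ Finset.range (n - 1), Y i ω} ≤
        ENNReal.ofReal
          (Real.exp (-2 * (p22 * p21 / (p22 + p21))^2 * Real.sqrt n)) := by
  rw [hexact22] at hY1
  rw [hexact21] at hY2
  clear hexact22 hexact21 hphat22 hphat22' hphat21 hphat21'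
  have hp22ne : p22 ≠ 0 := hp22.ne'
  have hp21ne : p21 ≠ 0 := hp21.ne'
  -- probabilities
  have hqb : (0:ℝ) ≤ (1/2 - ε) * p22 := by nlinarith
  have hqa : (0:ℝ) ≤ (1/2 + ε) * p21 := by nlinarith
  have hq0 : (0:ℝ) ≤ 1 - (1/2 - ε) * p22 - (1/2 + ε) * p21 := by nlinarith
  have hsum : (1/2 - ε) * p22 + (1/2 + ε) * p21
      + (1 - (1/2 - ε) * p22 - (1/2 + ε) * p21) = 1 := by ring
  -- the parameter t0
  obtain ⟨K, hK_def⟩ : ∃ K : ℝ, K = (1/2 - ε)/p22 + (1/2 + ε)/p21 := ⟨_, rfl⟩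
  have hK : 0 < K := by
    have h1 : 0 < (1/2 - ε)/p22 := div_pos (by linarith) hp22
    have h2 : 0 < (1/2 + ε)/p21 := div_pos (by linarith) hp21
    rw [hK_def]; linarith
  obtain ⟨t0, ht0_def⟩ : ∃ t0 : ℝ, t0 = min (ε / K) (min p22 p21) := ⟨_, rfl⟩
  have ht0 : 0 < t0 := ht0_def ▸ lt_min (div_pos hε hK) (lt_min hp22 hp21)
  have ht0K : t0 * K ≤ ε := by
    have h : t0 ≤ ε / K := ht0_def ▸ min_le_left (ε / K) (min p22 p21)
    calc t0 * K ≤ (ε / K) * K := by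
          exact mul_le_mul_of_nonneg_right h hK.le
      _ = ε := by field_simp
  have ht022 : t0 ≤ p22 := ht0_def ▸ (min_le_right _ _).trans (min_le_left _ _)
  have ht021 : t0 ≤ p21 := ht0_def ▸ (min_le_right _ _).trans (min_le_right _ _)
  -- mgf of each Y i
  have key : ∀ i, Integrable (fun ω => exp (t0 * Y i ω)) μ ∧
      ∫ ω, exp (t0 * Y i ω) ∂μ = (1/2 - ε) * p22 * exp (t0 * (1/p22))
        + (1/2 + ε) * p21 * exp (t0 * (-1/p21))
        + (1 - (1/2 - ε) * p22 - (1/2 + ε) * p21) := by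
    intro i
    refine three_point_mgf μ (Y i) (hmeas i) (1/p22) (-1/p21) ?_ ?_ ?_ _ _ _
      hqb hqa hq0 hsum (hY1 i) (hY2 i) (hY0 i) t0
    · have h1 : (0:ℝ) < 1/p22 := by positivity
      have h2 : -1/p21 < (0:ℝ) := by
        rw [neg_div]; exact neg_neg_iff_pos.mpr (by positivity)
      exact ne_of_gt (h2.trans h1)
    · positivity
    · rw [neg_div]
      exact ne_of_lt (neg_neg_iff_pos.mpr (by positivity))
  have hρ : ∀ i, mgf (Y i) μ t0 ≤ 1 - ε * t0 := by
    intro i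
    have hmgf_eq : mgf (Y i) μ t0 = (1/2 - ε) * p22 * exp (t0 * (1/p22))
        + (1/2 + ε) * p21 * exp (t0 * (-1/p21))
        + (1 - (1/2 - ε) * p22 - (1/2 + ε) * p21) := (key i).2
    rw [hmgf_eq]
    have hu : |t0 / p22| ≤ 1 := by
      rw [abs_of_pos (by positivity)]
      exact div_le_one_of_le₀ ht022 hp22.le
    have hv : |-(t0 / p21)| ≤ 1 := by
      rw [abs_neg, abs_of_pos (by positivity)]
      exact div_le_one_of_le₀ ht021 hp21.le
    have hb1 : exp (t0 * (1/p22)) ≤ 1 + t0/p22 + (t0/p22) ^ 2 := by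
      rw [mul_one_div]; exact exp_le_quad hu
    have hb2 : exp (t0 * (-1/p21)) ≤ 1 - t0/p21 + (t0/p21) ^ 2 := by
      have hx : t0 * (-1/p21) = -(t0/p21) := by ring
      rw [hx]
      have := exp_le_quad hv
      nlinarith [this]
    have e1 : (1/2 - ε) * p22 * (t0/p22) = (1/2 - ε) * t0 := by
      field_simp
    have e2 : (1/2 + ε) * p21 * (t0/p21) = (1/2 + ε) * t0 := by
      field_simp
    have e3 : (1/2 - ε) * p22 * (t0/p22) ^ 2 = ((1/2 - ε)/p22) * t0 ^ 2 := by
      field_simp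
    have e4 : (1/2 + ε) * p21 * (t0/p21) ^ 2 = ((1/2 + ε)/p21) * t0 ^ 2 := by
      field_simp
    have hKt2 : K * t0 ^ 2 ≤ ε * t0 := by
      have h' : t0 * K * t0 ≤ ε * t0 := mul_le_mul_of_nonneg_right ht0K ht0.le
      have h'' : K * t0 ^ 2 = t0 * K * t0 := by ring
      linarith [h'']
    have hKexp : K * t0 ^ 2 = ((1/2 - ε)/p22) * t0 ^ 2 + ((1/2 + ε)/p21) * t0 ^ 2 := by
      rw [hK_def]; ring
    have s1' : (1/2 - ε) * p22 * exp (t0 * (1/p22)) ≤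
        (1/2 - ε) * p22 + (1/2 - ε) * t0 + ((1/2 - ε)/p22) * t0 ^ 2 := by
      calc (1/2 - ε) * p22 * exp (t0 * (1/p22))
          ≤ (1/2 - ε) * p22 * (1 + t0/p22 + (t0/p22) ^ 2) :=
            mul_le_mul_of_nonneg_left hb1 hqb
        _ = (1/2 - ε) * p22 + (1/2 - ε) * p22 * (t0/p22)
            + (1/2 - ε) * p22 * (t0/p22) ^ 2 := by ring
        _ = (1/2 - ε) * p22 + (1/2 - ε) * t0 + ((1/2 - ε)/p22) * t0 ^ 2 := by
            rw [e1, e3]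
    have s2' : (1/2 + ε) * p21 * exp (t0 * (-1/p21)) ≤
        (1/2 + ε) * p21 - (1/2 + ε) * t0 + ((1/2 + ε)/p21) * t0 ^ 2 := by
      calc (1/2 + ε) * p21 * exp (t0 * (-1/p21))
          ≤ (1/2 + ε) * p21 * (1 - t0/p21 + (t0/p21) ^ 2) :=
            mul_le_mul_of_nonneg_left hb2 hqa
        _ = (1/2 + ε) * p21 - (1/2 + ε) * p21 * (t0/p21)
            + (1/2 + ε) * p21 * (t0/p21) ^ 2 := by ring
        _ = (1/2 + ε) * p21 - (1/2 + ε) * t0 + ((1/2 + ε)/p21) * t0 ^ 2 := by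
            rw [e2, e4]
    linarith [s1', s2', hKt2, hKexp]
  -- constants for the tail estimate
  obtain ⟨C2, hC2_def⟩ : ∃ C2 : ℝ, C2 = 2 * (p22 * p21 / (p22 + p21)) ^ 2 := ⟨_, rfl⟩
  have hC2 : 0 < C2 := by
    rw [hC2_def]
    have h : 0 < p22 * p21 / (p22 + p21) := div_pos (mul_pos hp22 hp21) (add_pos hp22 hp21)
    have h2 : (0:ℝ) < 2 := by norm_num
    exact mul_pos h2 (pow_pos h 2)
  obtain ⟨δ, hδ_def⟩ : ∃ δ : ℝ, δ = ε * t0 / (2 * C2) := ⟨_, rfl⟩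
  have hδ : 0 < δ := by
    rw [hδ_def]
    have h2 : (0:ℝ) < 2 := by norm_num
    exact div_pos (mul_pos hε ht0) (mul_pos h2 hC2)
  have hC2δ : C2 * δ = ε * t0 / 2 := by
    rw [hδ_def]; field_simp
  obtain ⟨R, hR_def⟩ : ∃ R : ℝ, R = (t0 + ε * t0 + C2 / δ) * 2 / (ε * t0) := ⟨_, rfl⟩
  refine ⟨⌈R⌉₊ + 1, fun n hn => ?_⟩
  have hn1 : 1 ≤ n := le_trans (Nat.le_add_left 1 ⌈R⌉₊) hn
  have hnR : R ≤ (n : ℝ) := by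
    calc R ≤ (⌈R⌉₊ : ℝ) := Nat.le_ceil R
      _ ≤ (n : ℝ) := by exact_mod_cast le_trans (Nat.le_add_right ⌈R⌉₊ 1) hn
  have hcast : (((n - 1 : ℕ)) : ℝ) = (n : ℝ) - 1 := by
    rw [Nat.cast_sub hn1, Nat.cast_one]
  -- the exponent inequality
  have hsq : Real.sqrt n ≤ δ * n + 1/δ := sqrt_le_lin (Nat.cast_nonneg n) hδ
  have hexpo : t0 + ((n - 1 : ℕ) : ℝ) * (-(ε * t0)) ≤
      -2 * (p22 * p21 / (p22 + p21)) ^ 2 * Real.sqrt n := by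
    rw [hcast]
    have hC2sq : C2 * Real.sqrt n ≤ (ε * t0 / 2) * n + C2 / δ := by
      have := mul_le_mul_of_nonneg_left hsq hC2.le
      calc C2 * Real.sqrt n ≤ C2 * (δ * n + 1/δ) := this
        _ = (C2 * δ) * n + C2 / δ := by ring
        _ = (ε * t0 / 2) * n + C2 / δ := by rw [hC2δ]
    have hlin : t0 + ε * t0 + C2 / δ ≤ (ε * t0 / 2) * n := by
      have hεt2 : (0:ℝ) ≤ ε * t0 / 2 := by positivity
      have h := mul_le_mul_of_nonneg_right hnR hεt2
      rw [hR_def] at h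
      have hεt : (0:ℝ) < ε * t0 := by positivity
      calc t0 + ε * t0 + C2 / δ
          = (t0 + ε * t0 + C2 / δ) * 2 / (ε * t0) * (ε * t0 / 2) := by
            field_simp
        _ ≤ (n : ℝ) * (ε * t0 / 2) := h
        _ = (ε * t0 / 2) * n := by ring
    have : -2 * (p22 * p21 / (p22 + p21)) ^ 2 * Real.sqrt n = -(C2 * Real.sqrt n) := by
      rw [hC2_def]; ring
    rw [this]
    nlinarith [hC2sq, hlin]
  -- Chernoff bound
  obtain ⟨X, hX_def⟩ : ∃ X : Ω → ℝ, X = ∑ i ∈ Finset.range (n - 1), Y i := ⟨_, rfl⟩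
  have hXint : Integrable (fun ω => exp (t0 * X ω)) μ := by
    rw [hX_def]
    exact hindep.integrable_exp_mul_sum hmeas (fun i _ => (key i).1)
  have hch : (μ {ω | -1 ≤ X ω}).toReal ≤ exp (-t0 * (-1)) * mgf X μ t0 :=
    measure_ge_le_exp_mul_mgf (-1) ht0.le hXint
  have hmgfX : mgf X μ t0 ≤ (1 - ε * t0) ^ (n - 1) := by
    rw [hX_def, hindep.mgf_sum hmeas]
    calc ∏ i ∈ Finset.range (n - 1), mgf (Y i) μ t0
        ≤ ∏ _i ∈ Finset.range (n - 1), (1 - ε * t0) :=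
          Finset.prod_le_prod (fun i _ => mgf_nonneg) (fun i _ => hρ i)
      _ = (1 - ε * t0) ^ (n - 1) := by
          rw [Finset.prod_const, Finset.card_range]
  have hρ0 : (0:ℝ) ≤ 1 - ε * t0 := by nlinarith [ht021, hp21']
  have hρe : 1 - ε * t0 ≤ exp (-(ε * t0)) := by
    have := Real.add_one_le_exp (-(ε * t0))
    linarith
  have hpow : (1 - ε * t0) ^ (n - 1) ≤ exp (((n - 1 : ℕ) : ℝ) * (-(ε * t0))) := by
    calc (1 - ε * t0) ^ (n - 1) ≤ exp (-(ε * t0)) ^ (n - 1) :=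
          pow_le_pow_left₀ hρ0 hρe _
      _ = exp (((n - 1 : ℕ) : ℝ) * (-(ε * t0))) := (Real.exp_nat_mul _ _).symm
  -- chain everything
  have hreal : exp (-t0 * (-1)) * mgf X μ t0 ≤
      exp (-2 * (p22 * p21 / (p22 + p21)) ^ 2 * Real.sqrt n) := by
    have h1 : exp (-t0 * (-1)) * mgf X μ t0 ≤ exp t0 * exp (((n - 1 : ℕ) : ℝ) * (-(ε * t0))) := by
      have : -t0 * (-1) = t0 := by ring
      rw [this]
      exact mul_le_mul_of_nonneg_left (hmgfX.trans hpow) (exp_pos t0).le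
    calc exp (-t0 * (-1)) * mgf X μ t0
        ≤ exp t0 * exp (((n - 1 : ℕ) : ℝ) * (-(ε * t0))) := h1
      _ = exp (t0 + ((n - 1 : ℕ) : ℝ) * (-(ε * t0))) := (Real.exp_add _ _).symm
      _ ≤ exp (-2 * (p22 * p21 / (p22 + p21)) ^ 2 * Real.sqrt n) := exp_le_exp.mpr hexpo
  have hsubset : {ω | 0 < 1 + ∑ i ∈ Finset.range (n - 1), Y i ω} ⊆ {ω | -1 ≤ X ω} := by
    intro ω hω
    simp only [Set.mem_setOf_eq] at hω ⊢
    rw [hX_def, Finset.sum_apply]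
    linarith
  calc μ {ω | 0 < 1 + ∑ i ∈ Finset.range (n - 1), Y i ω}
      ≤ μ {ω | -1 ≤ X ω} := measure_mono hsubset
    _ = ENNReal.ofReal ((μ {ω | -1 ≤ X ω}).toReal) :=
        (ENNReal.ofReal_toReal (measure_ne_top μ _)).symm
    _ ≤ ENNReal.ofReal (exp (-t0 * (-1)) * mgf X μ t0) := ENNReal.ofReal_le_ofReal hch
    _ ≤ ENNReal.ofReal (exp (-2 * (p22 * p21 / (p22 + p21)) ^ 2 * Real.sqrt n)) :=
        ENNReal.ofReal_le_ofReal hreal
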